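/- Let Q, R be real symmetric m×m matrices with R positive semidefinite, and L a real m×m matrix. Let φ : ℝᵐ → ℝᵐ be continuously differentiable and satisfy the differential sector condition with (Q, L, R). Let y : [0, 2π] → ℝᵐ be continuous and set Ĵ := (1/(2π)) ∫₀^{2π} J_φ(y(θ)) dθ, where J_φ is the Jacobian of φ. Then the matrix [Iₘ; −Ĵ]ᵀ [[Q, L],[Lᵀ, R]] [Iₘ; −Ĵ] is negative semidefinite; equivalently, for every w ∈ ℝᵐ, wᵀQw − 2wᵀL Ĵ w + (Ĵw)ᵀ R (Ĵw) ≤ 0. -/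

import Mathlib

open Matrix

/-- inequality (19) of the paper: if `φ` is `C¹` and satisfies
the differential sector condition with `(Q, L, R)` (`Q, R` symmetric, `R`
positive semidefinite), then the spatially averaged Jacobian
`Ĵ = (1/(2π)) ∫₀^{2π} J_φ(y(θ)) dθ` satisfies the same quadratic constraint:
for every `w`, `wᵀQw − 2wᵀL(Ĵw) + (Ĵw)ᵀR(Ĵw) ≤ 0`. -/
theorem averaged_jacobian_sector_condition
    (m : ℕ) (Q R L : Matrix (Fin m) (Fin m) ℝ)
    (hQ : Q.IsSymm) (hR : R.IsSymm)
    (hRpsd : ∀ w : Fin m → ℝ, 0 ≤ w ⬝ᵥ (R *ᵥ w))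
    (φ : (Fin m → ℝ) → Fin m → ℝ) (hφ : ContDiff ℝ 1 φ)
    (hsector : ∀ η w : Fin m → ℝ,
      w ⬝ᵥ (Q *ᵥ w) - 2 * (w ⬝ᵥ (L *ᵥ fderiv ℝ φ η w))
        + fderiv ℝ φ η w ⬝ᵥ (R *ᵥ fderiv ℝ φ η w) ≤ 0)
    (y : ℝ → Fin m → ℝ) (hy : ContinuousOn y (Set.Icc 0 (2 * Real.pi))) :
    ∀ w : Fin m → ℝ,
      w ⬝ᵥ (Q *ᵥ w)
        - 2 * (w ⬝ᵥ (L *ᵥ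
            (((2 * Real.pi)⁻¹ • ∫ θ in (0:ℝ)..(2 * Real.pi), fderiv ℝ φ (y θ)) w)))
        + (((2 * Real.pi)⁻¹ • ∫ θ in (0:ℝ)..(2 * Real.pi), fderiv ℝ φ (y θ)) w) ⬝ᵥ
            (R *ᵥ (((2 * Real.pi)⁻¹ •
              ∫ θ in (0:ℝ)..(2 * Real.pi), fderiv ℝ φ (y θ)) w)) ≤ 0 := by
  intro w
  have hπ : (0:ℝ) < 2 * Real.pi := by positivity
  set T : ℝ := 2 * Real.pi with hT
  have hRsym : ∀ x z : Fin m → ℝ, x ⬝ᵥ (R *ᵥ z) = z ⬝ᵥ (R *ᵥ x) := by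
    intro x z
    rw [Matrix.dotProduct_mulVec, ← Matrix.mulVec_transpose, hR.eq, dotProduct_comm]
  have hA : ContinuousOn (fun θ => fderiv ℝ φ (y θ)) (Set.Icc 0 T) :=
    (hφ.continuous_fderiv one_ne_zero).comp_continuousOn hy
  have huIcc : Set.uIcc (0:ℝ) T = Set.Icc 0 T := Set.uIcc_of_le hπ.le
  have hAint : IntervalIntegrable (fun θ => fderiv ℝ φ (y θ))
      MeasureTheory.volume 0 T := by
    apply ContinuousOn.intervalIntegrable; rwa [huIcc]
  set v : ℝ → Fin m → ℝ := fun θ => fderiv ℝ φ (y θ) w with hv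
  have hvcont : ContinuousOn v (Set.Icc 0 T) :=
    ((ContinuousLinearMap.apply ℝ (Fin m → ℝ) w).continuous).comp_continuousOn hA
  have hvint : IntervalIntegrable v MeasureTheory.volume 0 T := by
    apply ContinuousOn.intervalIntegrable; rwa [huIcc]
  have hkey : (∫ θ in (0:ℝ)..T, fderiv ℝ φ (y θ)) w = ∫ θ in (0:ℝ)..T, v θ := by
    simpa using
      ((ContinuousLinearMap.apply ℝ (Fin m → ℝ) w).intervalIntegral_comp_comm hAint).symm
  set u : Fin m → ℝ := T⁻¹ • ∫ θ in (0:ℝ)..T, v θ with hu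
  have hIv : (∫ θ in (0:ℝ)..T, v θ) = T • u := by
    rw [hu, smul_smul, mul_inv_cancel₀ hπ.ne', one_smul]
  -- linear functionals commute with the integral
  have hlin : ∀ (x : Fin m → ℝ) (M : Matrix (Fin m) (Fin m) ℝ),
      (∫ θ in (0:ℝ)..T, x ⬝ᵥ (M *ᵥ v θ)) = x ⬝ᵥ (M *ᵥ ∫ θ in (0:ℝ)..T, v θ) := by
    intro x M
    let g : (Fin m → ℝ) →ₗ[ℝ] ℝ :=
      { toFun := fun z => x ⬝ᵥ (M *ᵥ z)
        map_add' := by intro a b; simp [Matrix.mulVec_add, dotProduct_add]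
        map_smul' := by intro c a; simp [Matrix.mulVec_smul, dotProduct_smul] }
    exact (LinearMap.toContinuousLinearMap g).intervalIntegral_comp_comm hvint
  -- continuity of the scalar maps
  have hcont1 : ∀ x : Fin m → ℝ, ∀ M : Matrix (Fin m) (Fin m) ℝ,
      Continuous fun z : Fin m → ℝ => x ⬝ᵥ (M *ᵥ z) := by
    intro x M; simp only [dotProduct, Matrix.mulVec]; fun_prop
  have hcont2 : Continuous fun z : Fin m → ℝ => z ⬝ᵥ (R *ᵥ z) := by
    simp only [dotProduct, Matrix.mulVec]; fun_prop
  have hint1 : IntervalIntegrable (fun θ => w ⬝ᵥ (L *ᵥ v θ)) MeasureTheory.volume 0 T := by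
    apply ContinuousOn.intervalIntegrable; rw [huIcc]
    exact (hcont1 w L).comp_continuousOn hvcont
  have hint2 : IntervalIntegrable (fun θ => v θ ⬝ᵥ (R *ᵥ v θ)) MeasureTheory.volume 0 T := by
    apply ContinuousOn.intervalIntegrable; rw [huIcc]
    exact hcont2.comp_continuousOn hvcont
  have hint3 : IntervalIntegrable (fun θ => u ⬝ᵥ (R *ᵥ v θ)) MeasureTheory.volume 0 T := by
    apply ContinuousOn.intervalIntegrable; rw [huIcc]
    exact (hcont1 u R).comp_continuousOn hvcont
  -- averaged sector inequality
  have havg : (∫ θ in (0:ℝ)..T,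
      (w ⬝ᵥ (Q *ᵥ w) - 2 * (w ⬝ᵥ (L *ᵥ v θ)) + v θ ⬝ᵥ (R *ᵥ v θ))) ≤ 0 := by
    have h0 : (∫ θ in (0:ℝ)..T,
        (w ⬝ᵥ (Q *ᵥ w) - 2 * (w ⬝ᵥ (L *ᵥ v θ)) + v θ ⬝ᵥ (R *ᵥ v θ)))
        ≤ ∫ _ in (0:ℝ)..T, (0:ℝ) := by
      apply intervalIntegral.integral_mono_on hπ.le _ intervalIntegrable_const
      · intro θ _; exact hsector (y θ) w
      · exact ((intervalIntegrable_const.sub (hint1.const_mul 2)).add hint2)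
    simpa using h0
  have hexp : (∫ θ in (0:ℝ)..T,
      (w ⬝ᵥ (Q *ᵥ w) - 2 * (w ⬝ᵥ (L *ᵥ v θ)) + v θ ⬝ᵥ (R *ᵥ v θ)))
      = T * (w ⬝ᵥ (Q *ᵥ w)) - 2 * (T * (w ⬝ᵥ (L *ᵥ u)))
        + ∫ θ in (0:ℝ)..T, v θ ⬝ᵥ (R *ᵥ v θ) := by
    rw [intervalIntegral.integral_add (intervalIntegrable_const.sub (hint1.const_mul 2)) hint2,
      intervalIntegral.integral_sub intervalIntegrable_const (hint1.const_mul 2),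
      intervalIntegral.integral_const_mul, hlin w L, hIv,
      Matrix.mulVec_smul, dotProduct_smul, intervalIntegral.integral_const,
      smul_eq_mul, smul_eq_mul, sub_zero]
  -- Jensen
  have hjensen : T * (u ⬝ᵥ (R *ᵥ u)) ≤ ∫ θ in (0:ℝ)..T, v θ ⬝ᵥ (R *ᵥ v θ) := by
    have hpt : ∀ θ ∈ Set.Icc (0:ℝ) T,
        2 * (u ⬝ᵥ (R *ᵥ v θ)) - u ⬝ᵥ (R *ᵥ u) ≤ v θ ⬝ᵥ (R *ᵥ v θ) := by
      intro θ _
      have h0 := hRpsd (v θ - u)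
      have hexp2 : (v θ - u) ⬝ᵥ (R *ᵥ (v θ - u))
          = v θ ⬝ᵥ (R *ᵥ v θ) - 2 * (u ⬝ᵥ (R *ᵥ v θ)) + u ⬝ᵥ (R *ᵥ u) := by
        rw [Matrix.mulVec_sub, dotProduct_sub, sub_dotProduct,
          sub_dotProduct, hRsym (v θ) u]
        ring
      rw [hexp2] at h0
      linarith
    have hmono := intervalIntegral.integral_mono_on hπ.le
      ((hint3.const_mul 2).sub intervalIntegrable_const) hint2 hpt
    have hlhs : (∫ θ in (0:ℝ)..T, (2 * (u ⬝ᵥ (R *ᵥ v θ)) - u ⬝ᵥ (R *ᵥ u)))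
        = T * (u ⬝ᵥ (R *ᵥ u)) := by
      rw [intervalIntegral.integral_sub (hint3.const_mul 2) intervalIntegrable_const,
        intervalIntegral.integral_const_mul, hlin u R, hIv,
        Matrix.mulVec_smul, dotProduct_smul, intervalIntegral.integral_const,
        smul_eq_mul, smul_eq_mul, sub_zero]
      ring
    rwa [hlhs] at hmono
  -- rewrite the goal in terms of u
  have hgoal : ((T⁻¹ • ∫ θ in (0:ℝ)..T, fderiv ℝ φ (y θ)) w) = u := by
    rw [ContinuousLinearMap.smul_apply, hkey, hu]
  rw [hgoal]
  nlinarith [havg, hexp, hjensen, hπ]
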